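/- Let r ≥ 1 be an integer and τ = a + b·i ∈ ℂ with b > 0. Then ∫₀¹ ∫₀¹ |g₀(p + τq)|² · exp(−2·(2r+1)·π·b·q²) · 4π dp dq = (8π²/((2r+1)·b))^{1/2}. (This computes the squared L²-norm ‖g₀·t^{r+1/2}‖² = (8π²/((2r+1)b))^{1/2} of the section g₀·t^{r+1/2} over the fundamental domain, with respect to the standard hermitian structure and the symplectic volume ω = 4π dp∧dq; here |t^{r+1/2}(p,q)|² = exp(−2(2r+1)πbq²).) -/

import Mathlib

open MeasureTheory Complex Set
open scoped Real

/-- The theta function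
`g₀(z) = Σ_{m∈ℤ} exp(m·π·i·((4r+2)·z + (2r+1)·m·τ))`. -/
noncomputable def gZero (r : ℕ) (τ : ℂ) (z : ℂ) : ℂ :=
  ∑' m : ℤ, Complex.exp ((m : ℂ) * Real.pi * Complex.I *
      ((4 * (r : ℂ) + 2) * z + (2 * (r : ℂ) + 1) * (m : ℂ) * τ))


lemma tsum_setLIntegral_ne_top {ι E : Type*} [Countable ι] [NormedAddCommGroup E]
    (f : ι → ℝ → E) (Bd : ι → ℝ) (hB : Summable Bd)
    (h : ∀ i, ∀ q ∈ Set.Ioc (0:ℝ) 1, ‖f i q‖ ≤ Bd i) :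
    ∑' i, ∫⁻ q in Set.Ioc (0:ℝ) 1, ‖f i q‖₊ ≠ ⊤ := by
  have h1 : ∀ i, ∫⁻ q in Set.Ioc (0:ℝ) 1, (‖f i q‖₊ : ENNReal) ≤ (‖Bd i‖₊ : ENNReal) := by
    intro i
    calc ∫⁻ q in Set.Ioc (0:ℝ) 1, (‖f i q‖₊ : ENNReal)
        ≤ ∫⁻ _ in Set.Ioc (0:ℝ) 1, (‖Bd i‖₊ : ENNReal) := by
          refine lintegral_mono_ae ((ae_restrict_iff' measurableSet_Ioc).2 (.of_forall
            fun q hq => ?_))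
          exact_mod_cast (h i q hq).trans (le_abs_self _)
      _ = ‖Bd i‖₊ := by rw [setLIntegral_const]; simp [Real.volume_Ioc]
  refine ne_top_of_le_ne_top ?_ (ENNReal.tsum_le_tsum h1)
  rw [ENNReal.tsum_coe_ne_top_iff_summable]
  exact NNReal.summable_coe.mp (by simpa using hB.abs)

lemma summable_norm_theta (z τ : ℂ) (hτ : 0 < τ.im) :
    Summable fun m : ℤ ↦ ‖jacobiTheta₂_term m z τ‖ := by
  refine (summable_pow_mul_jacobiTheta₂_term_bound |z.im| hτ 0).of_nonneg_of_le
    (fun _ => norm_nonneg _) (fun n => ?_)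
  simpa using norm_jacobiTheta₂_term_le hτ le_rfl le_rfl n

lemma gZero_eq (r : ℕ) (τ : ℂ) (q p : ℝ) :
    gZero r τ (p + τ * q) =
      ∑' m : ℤ, jacobiTheta₂_term m ((2*(r:ℂ)+1) * τ * q) ((2*(r:ℂ)+1) * τ) *
        Complex.exp (2*(π:ℂ)*Complex.I*(2*(r:ℂ)+1)*m*p) := by
  unfold gZero
  refine tsum_congr fun m => ?_
  rw [jacobiTheta₂_term, ← Complex.exp_add]
  congr 1
  ring

lemma gZero_eq_theta (r : ℕ) (τ : ℂ) (z : ℂ) :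
    gZero r τ z = jacobiTheta₂ ((2*(r:ℂ)+1) * z) ((2*(r:ℂ)+1) * τ) := by
  rw [jacobiTheta₂, gZero]
  refine tsum_congr fun m => ?_
  rw [jacobiTheta₂_term]
  congr 1
  ring

lemma norm_cm (r : ℕ) (a b : ℝ) (q : ℝ) (m : ℤ) :
    ‖jacobiTheta₂_term m ((2*(r:ℂ)+1) * ((a:ℂ)+(b:ℂ)*Complex.I) * q)
        ((2*(r:ℂ)+1) * ((a:ℂ)+(b:ℂ)*Complex.I))‖
      = Real.exp (-(2*(r:ℝ)+1)*b*π*((m:ℝ)^2 + 2*(m:ℝ)*q)) := by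
  rw [norm_jacobiTheta₂_term]
  have h1 : ((2*(r:ℂ)+1) * ((a:ℂ)+(b:ℂ)*Complex.I)).im = (2*(r:ℝ)+1)*b := by simp
  have h2 : ((2*(r:ℂ)+1) * ((a:ℂ)+(b:ℂ)*Complex.I) * (q:ℂ)).im = (2*(r:ℝ)+1)*b*q := by
    simp [Complex.mul_im]
  rw [h1, h2]; ring_nf

lemma osc (r : ℕ) (k : ℤ) :
    (∫ p in Set.Ioc (0:ℝ) 1, Complex.exp (2*(π:ℂ)*Complex.I*(2*(r:ℂ)+1)*(k:ℂ)*(p:ℂ)))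
      = if k = 0 then 1 else 0 := by
  rcases eq_or_ne k 0 with hk | hk
  · simp [hk, Real.volume_Ioc]
  · rw [if_neg hk, ← intervalIntegral.integral_of_le zero_le_one]
    have hcc : (2*(π:ℂ)*Complex.I*(2*(r:ℂ)+1)*(k:ℂ)) ≠ 0 := by
      have h2r : (2*(r:ℂ)+1) ≠ 0 := by
        intro h
        have := congrArg Complex.re h
        simp at this
        linarith [Nat.cast_nonneg (α := ℝ) r]
      simp [Real.pi_ne_zero, Complex.I_ne_zero, h2r, hk]
    have : ∀ p : ℝ, 2*(π:ℂ)*Complex.I*(2*(r:ℂ)+1)*(k:ℂ)*(p:ℂ)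
        = (2*(π:ℂ)*Complex.I*(2*(r:ℂ)+1)*(k:ℂ)) * (p:ℂ) := fun p => rfl
    rw [integral_exp_mul_complex hcc]
    have h1 : (2*(π:ℂ)*Complex.I*(2*(r:ℂ)+1)*(k:ℂ)) * (1:ℝ)
        = ((2*(r:ℤ)+1)*k : ℤ) * (2*(π:ℂ)*Complex.I) := by push_cast; ring
    rw [h1, Complex.exp_int_mul_two_pi_mul_I]
    simp

set_option maxHeartbeats 1000000 in
lemma inner_integral (r : ℕ) (a b : ℝ) (hb : 0 < b) (q : ℝ) :
    (∫ p in Set.Ioc (0:ℝ) 1,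
        ‖gZero r ((a:ℂ)+(b:ℂ)*Complex.I)
          ((p:ℂ) + ((a:ℂ)+(b:ℂ)*Complex.I) * (q:ℂ))‖ ^ 2)
      = ∑' m : ℤ, Real.exp (-(2*(r:ℝ)+1)*b*π*((m:ℝ)^2 + 2*(m:ℝ)*q)) ^ 2 := by
  set τc : ℂ := (a:ℂ)+(b:ℂ)*Complex.I with hτc
  have hτ' : 0 < ((2*(r:ℂ)+1) * τc).im := by
    have : ((2*(r:ℂ)+1) * τc).im = (2*(r:ℝ)+1)*b := by simp [hτc]
    rw [this]; positivity
  set c : ℤ → ℂ := fun m => jacobiTheta₂_term m ((2*(r:ℂ)+1)*τc*q) ((2*(r:ℂ)+1)*τc) with hc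
  set e : ℤ → ℝ → ℂ := fun m p => Complex.exp (2*(π:ℂ)*Complex.I*(2*(r:ℂ)+1)*m*p) with he
  have hnorme : ∀ (m:ℤ) (p:ℝ), ‖e m p‖ = 1 := by
    intro m p
    have h0 : (2*(π:ℂ)*Complex.I*(2*(r:ℂ)+1)*m*p) = ((2*π*(2*(r:ℝ)+1)*m*p : ℝ):ℂ) * Complex.I := by
      push_cast; ring
    rw [he]; dsimp only
    rw [h0, Complex.norm_exp]
    simp
  have hSc : Summable fun m => ‖c m‖ := summable_norm_theta _ _ hτ'
  have hSfn : ∀ p:ℝ, Summable fun m => ‖c m * e m p‖ := by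
    intro p
    refine hSc.congr fun m => ?_
    rw [norm_mul, hnorme, mul_one]
  have hSf : ∀ p:ℝ, Summable fun m => c m * e m p := fun p => (hSfn p).of_norm
  have hnc : ∀ z : ℂ, ‖(starRingEnd ℂ) z‖ = ‖z‖ := fun z => by
    rw [Complex.norm_conj]
  have hg : ∀ p:ℝ, gZero r τc ((p:ℂ) + τc*(q:ℂ)) = ∑' m, c m * e m p := fun p => gZero_eq r τc q p
  -- pointwise product expansion
  have hprod : ∀ p:ℝ, gZero r τc ((p:ℂ) + τc*(q:ℂ)) * (starRingEnd ℂ) (gZero r τc ((p:ℂ) + τc*(q:ℂ)))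
      = ∑' mn : ℤ×ℤ, (c mn.1 * (starRingEnd ℂ) (c mn.2)) *
          Complex.exp (2*(π:ℂ)*Complex.I*(2*(r:ℂ)+1)*((mn.1 - mn.2 : ℤ):ℂ)*(p:ℂ)) := by
    intro p
    obtain ⟨F, hF⟩ : ∃ F : ℤ → ℂ, F = fun m => c m * e m p := ⟨_, rfl⟩
    obtain ⟨G, hG⟩ : ∃ G : ℤ → ℂ, G = fun m => (starRingEnd ℂ) (c m * e m p) := ⟨_, rfl⟩
    have h1 : Summable fun m => ‖F m‖ := by rw [hF]; exact hSfn p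
    have h2 : Summable fun m => ‖G m‖ := by
      rw [hG]; exact (hSfn p).congr (fun m => (hnc (c m * e m p)).symm)
    have h3 := Summable.tsum_mul_tsum h1.of_norm h2.of_norm (summable_mul_of_summable_norm h1 h2)
    rw [hF, hG] at h3
    rw [hg p, Complex.conj_tsum, h3]
    refine tsum_congr fun mn => ?_
    beta_reduce
    rw [map_mul]
    have hce : (starRingEnd ℂ) (e mn.2 p) = Complex.exp (-(2*(π:ℂ)*Complex.I*(2*(r:ℂ)+1)*mn.2*p)) := by
      rw [he]; dsimp only
      rw [← Complex.exp_conj]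
      congr 1
      simp only [map_mul, map_add, map_ofNat, map_one, Complex.conj_I, Complex.conj_ofReal,
        map_natCast, map_intCast]
      ring
    rw [hce, he]; dsimp only
    rw [mul_mul_mul_comm, ← Complex.exp_add]
    congr 2
    push_cast
    ring
  -- continuity and integrability
  have hcont : Continuous fun p:ℝ => gZero r τc ((p:ℂ) + τc*(q:ℂ)) := by
    have heq : (fun p:ℝ => gZero r τc ((p:ℂ) + τc*(q:ℂ)))
        = fun p:ℝ => jacobiTheta₂ ((2*(r:ℂ)+1)*((p:ℂ) + τc*(q:ℂ))) ((2*(r:ℂ)+1)*τc) :=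
      funext fun p => gZero_eq_theta r τc _
    rw [heq]
    have hin : Continuous fun p:ℝ => (((2*(r:ℂ)+1)*((p:ℂ) + τc*(q:ℂ)), (2*(r:ℂ)+1)*τc) : ℂ × ℂ) := by
      continuity
    refine continuous_iff_continuousAt.2 fun p => ?_
    exact ContinuousAt.comp (f := fun p:ℝ =>
      (((2*(r:ℂ)+1)*((p:ℂ) + τc*(q:ℂ)), (2*(r:ℂ)+1)*τc) : ℂ × ℂ))
      (continuousAt_jacobiTheta₂ _ hτ') hin.continuousAt
  have hI1 : IntegrableOn (fun p:ℝ => gZero r τc ((p:ℂ) + τc*(q:ℂ)) *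
      (starRingEnd ℂ) (gZero r τc ((p:ℂ) + τc*(q:ℂ)))) (Set.Ioc (0:ℝ) 1) := by
    exact (hcont.mul (Complex.continuous_conj.comp hcont)).integrableOn_Ioc
  -- interchange sum and integral
  have hswap : (∫ p in Set.Ioc (0:ℝ) 1, ∑' mn : ℤ×ℤ, (c mn.1 * (starRingEnd ℂ) (c mn.2)) *
          Complex.exp (2*(π:ℂ)*Complex.I*(2*(r:ℂ)+1)*((mn.1 - mn.2 : ℤ):ℂ)*(p:ℂ)))
      = ∑' mn : ℤ×ℤ, ∫ p in Set.Ioc (0:ℝ) 1, (c mn.1 * (starRingEnd ℂ) (c mn.2)) *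
          Complex.exp (2*(π:ℂ)*Complex.I*(2*(r:ℂ)+1)*((mn.1 - mn.2 : ℤ):ℂ)*(p:ℂ)) := by
    refine integral_tsum (fun mn => (Continuous.aestronglyMeasurable (by continuity))) ?_
    refine tsum_setLIntegral_ne_top _ (fun mn : ℤ×ℤ => ‖c mn.1‖ * ‖c mn.2‖)
      (hSc.mul_of_nonneg hSc (fun _ => norm_nonneg _) (fun _ => norm_nonneg _)) ?_
    intro mn p _
    have h0 : (2*(π:ℂ)*Complex.I*(2*(r:ℂ)+1)*((mn.1 - mn.2 : ℤ):ℂ)*(p:ℂ))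
        = ((2*π*(2*(r:ℝ)+1)*((mn.1 - mn.2 : ℤ):ℝ)*p : ℝ):ℂ) * Complex.I := by
      push_cast; ring
    have he1 : ‖Complex.exp (2*(π:ℂ)*Complex.I*(2*(r:ℂ)+1)*((mn.1 - mn.2 : ℤ):ℂ)*(p:ℂ))‖ = 1 := by
      rw [h0, Complex.norm_exp]
      simp
    show ‖c mn.1 * (starRingEnd ℂ) (c mn.2) *
        Complex.exp (2*(π:ℂ)*Complex.I*(2*(r:ℂ)+1)*((mn.1 - mn.2 : ℤ):ℂ)*(p:ℂ))‖
      ≤ ‖c mn.1‖ * ‖c mn.2‖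
    rw [norm_mul, norm_mul, hnc, he1, mul_one]
  -- per-term evaluation
  have hterm : ∀ mn : ℤ×ℤ, (∫ p in Set.Ioc (0:ℝ) 1, (c mn.1 * (starRingEnd ℂ) (c mn.2)) *
          Complex.exp (2*(π:ℂ)*Complex.I*(2*(r:ℂ)+1)*((mn.1 - mn.2 : ℤ):ℂ)*(p:ℂ)))
      = if mn.2 = mn.1 then c mn.1 * (starRingEnd ℂ) (c mn.2) else 0 := by
    intro mn
    rw [MeasureTheory.integral_const_mul, osc r (mn.1 - mn.2)]
    rcases eq_or_ne mn.2 mn.1 with h | h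
    · rw [if_pos (sub_eq_zero.2 h.symm), if_pos h, mul_one]
    · rw [if_neg (fun hs => h (sub_eq_zero.1 hs).symm), if_neg h, mul_zero]
  -- diagonal sum
  have hSd : Summable (fun mn : ℤ×ℤ => if mn.2 = mn.1 then c mn.1 * (starRingEnd ℂ) (c mn.2) else 0) := by
    refine Summable.of_norm_bounded (hSc.mul_of_nonneg hSc (fun _ => norm_nonneg _)
      (fun _ => norm_nonneg _)) (fun mn => ?_)
    rcases eq_or_ne mn.2 mn.1 with h | h
    · rw [if_pos h, norm_mul, hnc]
    · rw [if_neg h, norm_zero]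
      positivity
  have hdiag : (∑' mn : ℤ×ℤ, if mn.2 = mn.1 then c mn.1 * (starRingEnd ℂ) (c mn.2) else 0)
      = ∑' m:ℤ, c m * (starRingEnd ℂ) (c m) := by
    rw [Summable.tsum_prod' hSd (fun m => by
      refine summable_of_ne_finset_zero (s := {m}) (fun n hn => ?_)
      simp only [Finset.mem_singleton] at hn
      exact if_neg hn)]
    refine tsum_congr fun m => ?_
    rw [tsum_eq_single m (fun n hn => if_neg hn), if_pos rfl]
  -- put it together
  have habs : ∀ p:ℝ, (‖gZero r τc ((p:ℂ) + τc*(q:ℂ))‖)^2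
      = (gZero r τc ((p:ℂ) + τc*(q:ℂ)) * (starRingEnd ℂ) (gZero r τc ((p:ℂ) + τc*(q:ℂ)))).re := by
    intro p
    rw [Complex.mul_conj, Complex.sq_norm]
    simp
  calc (∫ p in Set.Ioc (0:ℝ) 1, ‖gZero r τc ((p:ℂ) + τc*(q:ℂ))‖ ^ 2)
      = ∫ p in Set.Ioc (0:ℝ) 1, (gZero r τc ((p:ℂ) + τc*(q:ℂ)) *
          (starRingEnd ℂ) (gZero r τc ((p:ℂ) + τc*(q:ℂ)))).re := by
        exact setIntegral_congr_fun measurableSet_Ioc (fun p _ => habs p)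
    _ = (∫ p in Set.Ioc (0:ℝ) 1, gZero r τc ((p:ℂ) + τc*(q:ℂ)) *
          (starRingEnd ℂ) (gZero r τc ((p:ℂ) + τc*(q:ℂ)))).re := integral_re hI1
    _ = (∑' m:ℤ, c m * (starRingEnd ℂ) (c m)).re := by
        rw [setIntegral_congr_fun measurableSet_Ioc (fun p _ => hprod p), hswap,
          tsum_congr hterm, hdiag]
    _ = ∑' m : ℤ, Real.exp (-(2*(r:ℝ)+1)*b*π*((m:ℝ)^2 + 2*(m:ℝ)*q)) ^ 2 := by
        have hcc : ∀ m:ℤ, c m * (starRingEnd ℂ) (c m)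
            = ((Real.exp (-(2*(r:ℝ)+1)*b*π*((m:ℝ)^2 + 2*(m:ℝ)*q)) ^ 2 : ℝ) : ℂ) := by
          intro m
          have hn2 : Complex.normSq (c m)
              = Real.exp (-(2*(r:ℝ)+1)*b*π*((m:ℝ)^2 + 2*(m:ℝ)*q)) ^ 2 := by
            rw [Complex.normSq_eq_norm_sq, hc]
            beta_reduce
            rw [norm_cm r a b q m]
          rw [Complex.mul_conj, hn2]
        rw [tsum_congr hcc, ← Complex.ofReal_tsum, Complex.ofReal_re]


/-- the squared `L²`-norm of the section `g₀·t^{r+1/2}` over the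
fundamental domain (with `|t^{r+1/2}(p,q)|² = exp(−2(2r+1)πbq²)` and symplectic
volume `4π dp∧dq`) equals `(8π²/((2r+1)b))^{1/2}`. -/
theorem statement13 (r : ℕ) (hr : 1 ≤ r) (a b : ℝ) (hb : 0 < b) :
    (∫ q in (0:ℝ)..1, ∫ p in (0:ℝ)..1,
        ‖gZero r ((a : ℂ) + (b : ℂ) * Complex.I)
            ((p : ℂ) + ((a : ℂ) + (b : ℂ) * Complex.I) * (q : ℂ))‖ ^ 2
          * Real.exp (-(2 * (2 * (r : ℝ) + 1) * Real.pi * b * q ^ 2)) * (4 * Real.pi))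
      = Real.sqrt (8 * Real.pi ^ 2 / ((2 * (r : ℝ) + 1) * b)) := by
  have hK : 0 < 2 * (2 * (r : ℝ) + 1) * π * b := by positivity
  -- pointwise simplification of the inner integral
  have hinner : ∀ q : ℝ,
      (∫ p in (0:ℝ)..1,
        ‖gZero r ((a : ℂ) + (b : ℂ) * Complex.I)
            ((p : ℂ) + ((a : ℂ) + (b : ℂ) * Complex.I) * (q : ℂ))‖ ^ 2
          * Real.exp (-(2 * (2 * (r : ℝ) + 1) * Real.pi * b * q ^ 2)) * (4 * Real.pi))
      = (∑' m : ℤ, Real.exp (-(2 * (2 * (r : ℝ) + 1) * π * b) * ((m:ℝ) + q) ^ 2)) * (4 * π) := by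
    intro q
    rw [intervalIntegral.integral_mul_const, intervalIntegral.integral_mul_const,
      intervalIntegral.integral_of_le zero_le_one, inner_integral r a b hb q]
    rw [← tsum_mul_right]
    congr 1
    refine tsum_congr fun m => ?_
    rw [← Real.exp_nat_mul, ← Real.exp_add]
    congr 1
    push_cast
    ring
  rw [intervalIntegral.integral_congr (fun q _ => hinner q), intervalIntegral.integral_mul_const,
    intervalIntegral.integral_of_le zero_le_one]
  -- interchange sum and integral
  have hswap : (∫ q in Set.Ioc (0:ℝ) 1,
        ∑' m : ℤ, Real.exp (-(2 * (2 * (r : ℝ) + 1) * π * b) * ((m:ℝ) + q) ^ 2))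
      = ∑' m : ℤ, ∫ q in Set.Ioc (0:ℝ) 1,
          Real.exp (-(2 * (2 * (r : ℝ) + 1) * π * b) * ((m:ℝ) + q) ^ 2) := by
    refine integral_tsum (fun m => (Continuous.aestronglyMeasurable (by continuity))) ?_
    refine tsum_setLIntegral_ne_top _
      (fun m : ℤ => Real.exp (-π * ((2 * (2 * (r : ℝ) + 1) * b) * (m:ℝ)^2
        - 2 * (2 * (2 * (r : ℝ) + 1) * b) * |(m:ℤ)|)))
      ?_ ?_
    · have := summable_pow_mul_jacobiTheta₂_term_bound (2 * (2 * (r : ℝ) + 1) * b)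
        (T := 2 * (2 * (r : ℝ) + 1) * b) (by positivity) 0
      refine this.congr fun m => ?_
      simp
    · intro m q hq
      have h1 : (m:ℝ)^2 - 2 * |(m:ℝ)| ≤ ((m:ℝ) + q)^2 := by
        have h3 : -(2 * |(m:ℝ)|) ≤ 2*(m:ℝ)*q := by
          rcases le_or_gt 0 (m:ℝ) with hm | hm
          · nlinarith [_root_.abs_of_nonneg hm, hq.1.le, hq.2]
          · nlinarith [_root_.abs_of_neg hm, hq.1.le, hq.2]
        nlinarith [sq_nonneg q]
      show |Real.exp (-(2 * (2 * (r:ℝ) + 1) * π * b) * ((m:ℝ) + q) ^ 2)|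
        ≤ Real.exp (-π * ((2 * (2 * (r : ℝ) + 1) * b) * (m:ℝ)^2
            - 2 * (2 * (2 * (r : ℝ) + 1) * b) * |(m:ℤ)|))
      rw [_root_.abs_of_nonneg (Real.exp_pos _).le, Real.exp_le_exp]
      have hcast : ((|m| : ℤ) : ℝ) = |(m:ℝ)| := by push_cast; ring
      rw [hcast]
      nlinarith [mul_le_mul_of_nonneg_left h1
        (show (0:ℝ) ≤ π * (2 * (2 * (r:ℝ) + 1) * b) by positivity)]
  rw [hswap]
  -- shift each integral and sum up to the Gaussian integral over ℝ
  have hshift : ∀ m : ℤ, (∫ q in Set.Ioc (0:ℝ) 1,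
        Real.exp (-(2 * (2 * (r : ℝ) + 1) * π * b) * ((m:ℝ) + q) ^ 2))
      = ∫ x in Set.Ioc ((m:ℝ)) ((m:ℝ)+1),
          Real.exp (-(2 * (2 * (r : ℝ) + 1) * π * b) * x ^ 2) := by
    intro m
    have h2 := intervalIntegral.integral_comp_add_right (a := (0:ℝ)) (b := 1)
      (f := fun x => Real.exp (-(2 * (2 * (r : ℝ) + 1) * π * b) * x ^ 2)) ((m:ℝ))
    simp only [zero_add] at h2
    rw [add_comm (1:ℝ) (m:ℝ)] at h2
    rw [← intervalIntegral.integral_of_le zero_le_one,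
      ← intervalIntegral.integral_of_le (by linarith : (m:ℝ) ≤ (m:ℝ)+1), ← h2]
    refine intervalIntegral.integral_congr fun x _ => ?_
    ring_nf
  rw [tsum_congr hshift]
  have hInt : Integrable (fun x : ℝ => Real.exp (-(2 * (2 * (r : ℝ) + 1) * π * b) * x ^ 2)) :=
    integrable_exp_neg_mul_sq hK
  have hUnion : (∫ x : ℝ, Real.exp (-(2 * (2 * (r : ℝ) + 1) * π * b) * x ^ 2))
      = ∑' m : ℤ, ∫ x in Set.Ioc ((m:ℝ)) ((m:ℝ)+1),
          Real.exp (-(2 * (2 * (r : ℝ) + 1) * π * b) * x ^ 2) := by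
    rw [← integral_iUnion (fun m : ℤ => measurableSet_Ioc)
      (pairwise_disjoint_Ioc_intCast ℝ) (by rw [iUnion_Ioc_intCast]; exact hInt.integrableOn)]
    rw [iUnion_Ioc_intCast, Measure.restrict_univ]
  rw [← hUnion, integral_gaussian]
  -- final arithmetic
  have h8 : 8 * π ^ 2 / ((2 * (r : ℝ) + 1) * b)
      = (4*π)^2 * (π / (2 * (2 * (r : ℝ) + 1) * π * b)) := by
    have h1 : (2 * (r : ℝ) + 1) ≠ 0 := by positivity
    field_simp
    ring
  rw [h8, Real.sqrt_mul (sq_nonneg _), Real.sqrt_sq (by positivity)]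
  ring
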